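/- Let 𝒳 be a Polish space. If Borel probability measures μ_n on 𝒳 converge weakly to μ, and f_n ∈ C_b(𝒳) converge to f ∈ C_b(𝒳) bounded-uniformly-on-compacts, then log ∫ e^{f_n} dμ_n → log ∫ e^f dμ. -/

import Mathlib

open MeasureTheory Filter Topology Metric
open scoped ENNReal

lemma tight_of_tendsto_aux {𝒳 : Type*} [MetricSpace 𝒳] [CompleteSpace 𝒳]
    [TopologicalSpace.SeparableSpace 𝒳]
    [MeasurableSpace 𝒳] [OpensMeasurableSpace 𝒳]
    (μs : ℕ → ProbabilityMeasure 𝒳) (μ : ProbabilityMeasure 𝒳)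
    (hμs : Tendsto μs atTop (𝓝 μ)) {ε : ℝ≥0∞} (hε : 0 < ε) :
    ∃ K : Set 𝒳, IsCompact K ∧ (∀ n, (μs n : Measure 𝒳) Kᶜ ≤ ε) ∧ (μ : Measure 𝒳) Kᶜ ≤ ε := by
  haveI : Nonempty 𝒳 := μ.nonempty
  set x : ℕ → 𝒳 := TopologicalSpace.denseSeq 𝒳 with hx
  have hxd : DenseRange x := TopologicalSpace.denseRange_denseSeq 𝒳
  set U : ℕ → ℕ → Set 𝒳 := fun k m => ⋃ i ∈ Finset.range m, ball (x i) (1 / (k + 1)) with hU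
  have hUopen : ∀ k m, IsOpen (U k m) := fun k m =>
    isOpen_biUnion fun i _ => isOpen_ball
  have hUmono : ∀ k, Monotone (U k) := by
    intro k m m' hmm'
    exact Set.biUnion_subset_biUnion_left (Finset.range_subset_range.2 hmm')
  have hUuniv : ∀ k, (⋃ m, U k m) = Set.univ := by
    intro k
    apply Set.eq_univ_of_forall
    intro y
    have hpos : (0 : ℝ) < 1 / (k + 1) := by positivity
    obtain ⟨i, hi⟩ := hxd.exists_dist_lt y hpos
    exact Set.mem_iUnion.2 ⟨i + 1, Set.mem_biUnion (Finset.mem_range.2 (Nat.lt_succ_self i))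
      (mem_ball.mpr hi)⟩
  -- each probability measure eventually fills U k m
  have step1 : ∀ (ν : ProbabilityMeasure 𝒳) (k : ℕ) (η : ℝ≥0∞), 0 < η →
      ∃ m, 1 - η < (ν : Measure 𝒳) (U k m) := by
    intro ν k η hη
    have hten : Tendsto (fun m => (ν : Measure 𝒳) (U k m)) atTop
        (𝓝 ((ν : Measure 𝒳) (⋃ m, U k m))) := tendsto_measure_iUnion_atTop (hUmono k)
    rw [hUuniv k, measure_univ] at hten
    have h1 : (1 : ℝ≥0∞) - η < 1 :=
      ENNReal.sub_lt_self ENNReal.one_ne_top one_ne_zero hη.ne'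
    exact (hten.eventually (lt_mem_nhds h1)).exists
  -- key: a single m working for all n and μ
  have key : ∀ (k : ℕ) (η : ℝ≥0∞), 0 < η → ∃ m : ℕ,
      (∀ n, 1 - η ≤ (μs n : Measure 𝒳) (U k m)) ∧ 1 - η ≤ (μ : Measure 𝒳) (U k m) := by
    intro k η hη
    obtain ⟨m₀, hm₀⟩ := step1 μ k η hη
    have hlim : (1 : ℝ≥0∞) - η < liminf (fun n => (μs n : Measure 𝒳) (U k m₀)) atTop :=
      lt_of_lt_of_le hm₀
        (ProbabilityMeasure.le_liminf_measure_open_of_tendsto hμs (hUopen k m₀))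
    obtain ⟨N, hN⟩ := (eventually_atTop.1 (eventually_lt_of_lt_liminf hlim))
    choose mc hmc using fun n => step1 (μs n) k η hη
    set m : ℕ := max m₀ ((Finset.range N).sup mc) with hm
    refine ⟨m, fun n => ?_, le_trans hm₀.le (measure_mono (hUmono k (le_max_left _ _)))⟩
    rcases le_or_gt N n with h | h
    · exact le_trans (hN n h).le (measure_mono (hUmono k (le_max_left _ _)))
    · refine le_trans (hmc n).le (measure_mono (hUmono k ?_))
      exact le_trans (Finset.le_sup (Finset.mem_range.2 h)) (le_max_right _ _)
  -- choose m k for η k = ε * 2⁻¹ ^ (k+1)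
  have hηpos : ∀ k : ℕ, (0 : ℝ≥0∞) < ε * 2⁻¹ ^ (k + 1) := by
    intro k
    exact ENNReal.mul_pos hε.ne' (pow_ne_zero _ (by simp))
  choose m hm1 hm2 using fun k => key k (ε * 2⁻¹ ^ (k + 1)) (hηpos k)
  set K : Set 𝒳 := ⋂ k, closure (U k (m k)) with hK
  have hKclosed : IsClosed K := isClosed_iInter fun k => isClosed_closure
  have hKcompact : IsCompact K := by
    refine TotallyBounded.isCompact_of_isClosed (Metric.totallyBounded_iff.2 ?_) hKclosed
    intro δ hδ
    obtain ⟨k, hk⟩ := exists_nat_one_div_lt hδ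
    refine ⟨x '' Finset.range (m k), (Set.toFinite _).image x, ?_⟩
    have hsub : K ⊆ ⋃ i ∈ Finset.range (m k), closedBall (x i) (1 / (k + 1)) := by
      refine le_trans (Set.iInter_subset _ k) (closure_minimal ?_ ?_)
      · exact Set.iUnion₂_mono fun i _ => ball_subset_closedBall
      · exact (Finset.range (m k)).finite_toSet.isClosed_biUnion
          fun i _ => isClosed_closedBall
    refine hsub.trans ?_
    intro y hy
    obtain ⟨i, hi, hyi⟩ := Set.mem_iUnion₂.1 hy
    exact Set.mem_biUnion (Set.mem_image_of_mem x hi) (lt_of_le_of_lt hyi hk)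
  have hmass : ∀ ν : ProbabilityMeasure 𝒳,
      (∀ k, 1 - ε * 2⁻¹ ^ (k + 1) ≤ (ν : Measure 𝒳) (U k (m k))) → (ν : Measure 𝒳) Kᶜ ≤ ε := by
    intro ν hν
    have h1 : (ν : Measure 𝒳) Kᶜ ≤ ∑' k, (ν : Measure 𝒳) (U k (m k))ᶜ := by
      rw [hK, Set.compl_iInter]
      refine le_trans (measure_iUnion_le _) (ENNReal.tsum_le_tsum fun k => measure_mono ?_)
      exact Set.compl_subset_compl.2 subset_closure
    have h2 : ∀ k, (ν : Measure 𝒳) (U k (m k))ᶜ ≤ ε * 2⁻¹ ^ (k + 1) := by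
      intro k
      rw [prob_compl_eq_one_sub (hUopen k (m k)).measurableSet]
      calc 1 - (ν : Measure 𝒳) (U k (m k)) ≤ 1 - (1 - ε * 2⁻¹ ^ (k + 1)) :=
            tsub_le_tsub_left (hν k) 1
        _ ≤ ε * 2⁻¹ ^ (k + 1) := tsub_tsub_le
    calc (ν : Measure 𝒳) Kᶜ ≤ ∑' k, (ν : Measure 𝒳) (U k (m k))ᶜ := h1
      _ ≤ ∑' k, ε * 2⁻¹ ^ (k + 1) := ENNReal.tsum_le_tsum h2
      _ = ε := by
          rw [ENNReal.tsum_mul_left]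
          have h3 : ∑' (k : ℕ), (2⁻¹ : ℝ≥0∞) ^ (k + 1) = 1 := by
            simp_rw [pow_succ', ENNReal.tsum_mul_left, ENNReal.tsum_geometric]
            rw [ENNReal.one_sub_inv_two, inv_inv,
              ENNReal.inv_mul_cancel two_ne_zero ENNReal.ofNat_ne_top]
          rw [h3, mul_one]
  exact ⟨K, hKcompact, fun n => hmass (μs n) (hm1 · n), hmass μ hm2⟩

noncomputable def expB {𝒳 : Type*} [TopologicalSpace 𝒳] (g : BoundedContinuousFunction 𝒳 ℝ) :
    BoundedContinuousFunction 𝒳 ℝ :=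
  BoundedContinuousFunction.mkOfBound ⟨fun x => Real.exp (g x),
    Real.continuous_exp.comp g.continuous⟩ (2 * Real.exp ‖g‖) (by
    intro x y
    rw [Real.dist_eq]
    have hx : Real.exp (g x) ≤ Real.exp ‖g‖ :=
      Real.exp_le_exp.2 ((abs_le.1 (g.norm_coe_le_norm x)).2)
    have hy : Real.exp (g y) ≤ Real.exp ‖g‖ :=
      Real.exp_le_exp.2 ((abs_le.1 (g.norm_coe_le_norm y)).2)
    have hx0 := Real.exp_pos (g x)
    have hy0 := Real.exp_pos (g y)
    rw [abs_le]
    constructor <;> simp only [ContinuousMap.coe_mk] <;> nlinarith)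

@[simp] lemma expB_apply {𝒳 : Type*} [TopologicalSpace 𝒳] (g : BoundedContinuousFunction 𝒳 ℝ)
    (x : 𝒳) : expB g x = Real.exp (g x) := rfl


/-- Joint sequential continuity of `(f, μ) ↦ log ∫ e^f dμ` on a Polish space: if `μ_n → μ`
weakly and `f_n → f` bounded-uniformly-on-compacts (i.e. strictly), then
`log ∫ e^{f_n} dμ_n → log ∫ e^f dμ`. -/
theorem log_exp_integral_tendsto_of_weak_and_buc
    {𝒳 : Type*} [TopologicalSpace 𝒳] [PolishSpace 𝒳] [MeasurableSpace 𝒳] [BorelSpace 𝒳]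
    (μs : ℕ → ProbabilityMeasure 𝒳) (μ : ProbabilityMeasure 𝒳)
    (hμs : Tendsto μs atTop (𝓝 μ))
    (fs : ℕ → BoundedContinuousFunction 𝒳 ℝ) (f : BoundedContinuousFunction 𝒳 ℝ)
    (hbd : ∃ C : ℝ, ∀ n, ‖fs n‖ ≤ C)
    (hunif : ∀ K : Set 𝒳, IsCompact K →
      TendstoUniformlyOn (fun n x => fs n x) (fun x => f x) atTop K) :
    Tendsto (fun n => Real.log (∫ x, Real.exp (fs n x) ∂(μs n : Measure 𝒳))) atTop
      (𝓝 (Real.log (∫ x, Real.exp (f x) ∂(μ : Measure 𝒳)))) := by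

  letI := TopologicalSpace.upgradeIsCompletelyMetrizable 𝒳
  obtain ⟨C, hC⟩ := hbd
  set C' : ℝ := max (max C ‖f‖) 0 with hC'def
  have hC'0 : 0 ≤ C' := le_max_right _ _
  set M : ℝ := Real.exp C' with hMdef
  have hM1 : (1 : ℝ) ≤ M := Real.one_le_exp hC'0
  have hM0 : (0 : ℝ) < M := lt_of_lt_of_le one_pos hM1
  have hfsle : ∀ n x, |fs n x| ≤ C' :=
    fun n x => le_trans ((fs n).norm_coe_le_norm x)
      (le_trans (hC n) (le_max_of_le_left (le_max_left _ _)))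
  have hfle : ∀ x, |f x| ≤ C' :=
    fun x => le_trans (f.norm_coe_le_norm x) (le_max_of_le_left (le_max_right _ _))
  -- bound on exp values
  have hexp_le : ∀ (a : ℝ), |a| ≤ C' → Real.exp a ≤ M :=
    fun a ha => Real.exp_le_exp.2 ((abs_le.1 ha).2)
  -- Step A: ∫ expB f dμs n → ∫ expB f dμ
  have hA : Tendsto (fun n => ∫ x, expB f x ∂(μs n : Measure 𝒳)) atTop
      (𝓝 (∫ x, expB f x ∂(μ : Measure 𝒳))) :=
    (ProbabilityMeasure.tendsto_iff_forall_integral_tendsto.mp hμs) (expB f)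
  -- Step B: difference tends to zero
  have hB : Tendsto (fun n => (∫ x, expB (fs n) x ∂(μs n : Measure 𝒳))
      - ∫ x, expB f x ∂(μs n : Measure 𝒳)) atTop (𝓝 0) := by
    rw [NormedAddCommGroup.tendsto_nhds_zero]
    intro ε hε
    -- choose a compact set
    set δ : ℝ := ε / (8 * M) with hδdef
    have hδ0 : 0 < δ := by positivity
    obtain ⟨K, hKcomp, hKμs, -⟩ := tight_of_tendsto_aux μs μ hμs
      (ε := ENNReal.ofReal δ) (by simpa using hδ0)
    have hKm : MeasurableSet K := hKcomp.isClosed.measurableSet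
    -- uniform convergence on K
    set δ₂ : ℝ := min (ε / (8 * M)) 1 with hδ₂def
    have hδ₂0 : 0 < δ₂ := lt_min (by positivity) one_pos
    have hev := (hunif K hKcomp) _ (Metric.dist_mem_uniformity hδ₂0)
    filter_upwards [hev] with n hn
    -- pointwise bounds
    have hptK : ∀ x ∈ K, ‖expB (fs n) x - expB f x‖ ≤ ε / 4 := by
      intro x hx
      have hd : |fs n x - f x| ≤ δ₂ := by
        have := hn x hx
        rw [Real.dist_eq, abs_sub_comm] at this
        exact this.le
      have h1 : |Real.exp (fs n x - f x) - 1| ≤ 2 * |fs n x - f x| :=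
        Real.abs_exp_sub_one_le (le_trans hd (min_le_right _ _))
      have hfx : Real.exp (f x) ≤ M := hexp_le _ (hfle x)
      have key : |Real.exp (fs n x) - Real.exp (f x)|
          = Real.exp (f x) * |Real.exp (fs n x - f x) - 1| := by
        have heq2 : Real.exp (fs n x) - Real.exp (f x)
            = Real.exp (f x) * (Real.exp (fs n x - f x) - 1) := by
          rw [mul_sub, ← Real.exp_add, mul_one]; ring_nf
        rw [heq2, abs_mul, abs_of_pos (Real.exp_pos (f x))]
      have hd2 : |fs n x - f x| ≤ ε / (8 * M) := le_trans hd (min_le_left _ _)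
      have : |Real.exp (fs n x) - Real.exp (f x)| ≤ M * (2 * (ε / (8 * M))) := by
        rw [key]
        have h2 : |Real.exp (fs n x - f x) - 1| ≤ 2 * (ε / (8 * M)) := by nlinarith
        have := mul_le_mul hfx h2 (abs_nonneg _) (le_of_lt hM0)
        nlinarith [Real.exp_pos (f x), abs_nonneg (Real.exp (fs n x - f x) - 1)]
      calc ‖expB (fs n) x - expB f x‖ = |Real.exp (fs n x) - Real.exp (f x)| := rfl
        _ ≤ M * (2 * (ε / (8 * M))) := this
        _ = ε / 4 := by field_simp; ring
    have hptKc : ∀ x, ‖expB (fs n) x - expB f x‖ ≤ 2 * M := by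
      intro x
      have h1 : Real.exp (fs n x) ≤ M := hexp_le _ (hfsle n x)
      have h2 : Real.exp (f x) ≤ M := hexp_le _ (hfle x)
      have h3 := Real.exp_pos (fs n x)
      have h4 := Real.exp_pos (f x)
      rw [Real.norm_eq_abs, abs_le]
      constructor <;> simp only [expB_apply] <;> nlinarith
    -- split the integral
    set ν : Measure 𝒳 := (μs n : Measure 𝒳) with hν
    haveI : IsProbabilityMeasure ν := (μs n).2
    have hint : Integrable (fun x => expB (fs n) x - expB f x) ν :=
      ((expB (fs n)).integrable ν).sub ((expB f).integrable ν)
    have hsplit : ∫ x, (expB (fs n) x - expB f x) ∂ν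
        = (∫ x in K, (expB (fs n) x - expB f x) ∂ν)
          + ∫ x in Kᶜ, (expB (fs n) x - expB f x) ∂ν :=
      (integral_add_compl hKm hint).symm
    have hbK : ‖∫ x in K, (expB (fs n) x - expB f x) ∂ν‖ ≤ (ε / 4) * (ν K).toReal :=
      norm_setIntegral_le_of_norm_le_const (measure_lt_top ν K) hptK
    have hbKc : ‖∫ x in Kᶜ, (expB (fs n) x - expB f x) ∂ν‖ ≤ (2 * M) * (ν Kᶜ).toReal :=
      norm_setIntegral_le_of_norm_le_const (measure_lt_top ν Kᶜ)
        (fun x _ => hptKc x)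
    have hνK1 : (ν K).toReal ≤ 1 := by
      have := prob_le_one (μ := ν) (s := K)
      simpa using ENNReal.toReal_mono ENNReal.one_ne_top this
    have hνKc : (ν Kᶜ).toReal ≤ δ := by
      refine ENNReal.toReal_le_of_le_ofReal hδ0.le ?_
      exact hKμs n
    have hfinal : ‖∫ x, (expB (fs n) x - expB f x) ∂ν‖ < ε := by
      rw [hsplit]
      calc ‖_ + _‖ ≤ _ + _ := norm_add_le _ _
        _ ≤ (ε / 4) * (ν K).toReal + (2 * M) * (ν Kᶜ).toReal := add_le_add hbK hbKc
        _ ≤ (ε / 4) * 1 + (2 * M) * δ := by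
            refine add_le_add (mul_le_mul_of_nonneg_left hνK1 (by positivity))
              (mul_le_mul_of_nonneg_left hνKc (by positivity))
        _ = ε / 4 + ε / 4 := by rw [hδdef]; field_simp; ring
        _ < ε := by linarith
    have heq : ∫ x, (expB (fs n) x - expB f x) ∂ν
        = (∫ x, expB (fs n) x ∂ν) - ∫ x, expB f x ∂ν :=
      integral_sub ((expB (fs n)).integrable ν) ((expB f).integrable ν)
    rw [heq] at hfinal
    exact hfinal
  -- combine
  have hAB : Tendsto (fun n => ∫ x, expB (fs n) x ∂(μs n : Measure 𝒳)) atTop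
      (𝓝 (∫ x, expB f x ∂(μ : Measure 𝒳))) := by
    have := hB.add hA
    simpa using this
  -- positivity of the limit
  have hpos : 0 < ∫ x, expB f x ∂(μ : Measure 𝒳) := by
    haveI : IsProbabilityMeasure (μ : Measure 𝒳) := μ.2
    have h1 : ∫ x, Real.exp (-‖f‖) ∂(μ : Measure 𝒳) ≤ ∫ x, expB f x ∂(μ : Measure 𝒳) := by
      refine integral_mono (integrable_const _) ((expB f).integrable _) fun x => ?_
      simp only [expB_apply]
      exact Real.exp_le_exp.2 ((abs_le.1 (f.norm_coe_le_norm x)).1)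
    rw [integral_const] at h1
    simp only [probReal_univ, one_smul] at h1
    exact lt_of_lt_of_le (Real.exp_pos _) h1
  exact (hAB.log (ne_of_gt hpos))
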